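/- Let p, q, r be nonzero with p² ≠ q², q² ≠ r², p² ≠ r². Given generic initial values u, ũ, û, ū, define ũû from Q1(0) on the bottom face, ũū from the p-r side equation (ũū - ū)(ũ - u) + p²ū·ũū = 0, ûū from the q-r side equation, and then compute ũûū in three ways: from the back face equation (with shift in n), from the right face equation (with shift in m), and from the top Q1(0) equation in ū. All three computed values of ũûū coincide. -/

import Mathlib

/-- Consistency around the cube for Q1(0) on the bottom/top faces together with the
auto-BT (x̄' − x̄)(x' − x) + c² x̄ x̄' = 0 on the side faces: the three ways of computing
the value ũ̂̄ (back face, right face, top face) coincide. -/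
theorem stmt_8 {K : Type*} [Field K] (p q r : K)
    (hp : p ≠ 0) (hq : q ≠ 0) (hr : r ≠ 0)
    (hpq : p ^ 2 ≠ q ^ 2) (hqr : q ^ 2 ≠ r ^ 2) (hpr : p ^ 2 ≠ r ^ 2)
    (u ut uh ub uth utb uhb w1 w2 w3 : K)
    -- genericity of the initial data
    (hgen1 : ut - u ≠ 0) (hgen2 : uh - u ≠ 0) (hgen3 : ub ≠ 0)
    (hgen4 : utb ≠ 0) (hgen5 : uhb ≠ 0)
    -- the defining linear equations for w1, w2, w3 are nondegenerate
    (hnd1 : (uth - ut) + q ^ 2 * utb ≠ 0)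
    (hnd2 : (uth - uh) + p ^ 2 * uhb ≠ 0)
    (hnd3 : p ^ 2 * (ub - uhb) - q ^ 2 * (ub - utb) ≠ 0)
    -- bottom face: Q1(0) determines uth
    (hbot : p ^ 2 * (u - uh) * (ut - uth) = q ^ 2 * (u - ut) * (uh - uth))
    -- side faces: the p- and q-direction BT equations determine utb and uhb
    (hside1 : (utb - ub) * (ut - u) + p ^ 2 * ub * utb = 0)
    (hside2 : (uhb - ub) * (uh - u) + q ^ 2 * ub * uhb = 0)
    -- back face (shift in n): determines w1
    (hback : (w1 - utb) * (uth - ut) + q ^ 2 * utb * w1 = 0)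
    -- right face (shift in m): determines w2
    (hright : (w2 - uhb) * (uth - uh) + p ^ 2 * uhb * w2 = 0)
    -- top face: Q1(0) in the barred variables determines w3
    (htop : p ^ 2 * (ub - uhb) * (utb - w3) = q ^ 2 * (ub - utb) * (uhb - w3)) :
    w1 = w2 ∧ w2 = w3 := by
  -- leading coefficients of the equations for utb, uhb, uth are nonzero
  have hB : (ut - u) + p ^ 2 * ub ≠ 0 := by
    intro h
    have h1 : utb * ((ut - u) + p ^ 2 * ub) = ub * (ut - u) := by linear_combination hside1
    rw [h, mul_zero] at h1
    exact mul_ne_zero hgen3 hgen1 h1.symm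
  have hB' : (uh - u) + q ^ 2 * ub ≠ 0 := by
    intro h
    have h1 : uhb * ((uh - u) + q ^ 2 * ub) = ub * (uh - u) := by linear_combination hside2
    rw [h, mul_zero] at h1
    exact mul_ne_zero hgen3 hgen2 h1.symm
  have hC : q ^ 2 * (u - ut) - p ^ 2 * (u - uh) ≠ 0 := by
    intro h
    -- then the RHS is forced to vanish as well, giving ut = uh and hence p² = q²
    have hE : q ^ 2 * (u - ut) * uh - p ^ 2 * (u - uh) * ut = 0 := by
      linear_combination uth * h - hbot
    have hE' : q ^ 2 * (u - ut) * (uh - ut) = 0 := by linear_combination hE - ut * h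
    have hne : q ^ 2 * (u - ut) ≠ 0 := by
      intro h0
      rcases mul_eq_zero.mp h0 with h0 | h0
      · exact hq (pow_eq_zero_iff (n := 2) (by norm_num) |>.mp h0)
      · exact hgen1 (by linear_combination -h0)
    have huhut : uh = ut := by
      rcases mul_eq_zero.mp hE' with h0 | h0
      · exact absurd h0 hne
      · exact sub_eq_zero.mp h0
    apply hpq
    have hut : u - ut ≠ 0 := fun h0 => hgen1 (by linear_combination -h0)
    have : q ^ 2 * (u - ut) = p ^ 2 * (u - ut) := by rw [← huhut] at h ⊢; linear_combination h
    exact (mul_right_cancel₀ hut this).symm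
  -- explicit values of uth, utb, uhb
  have huth : uth = (q ^ 2 * (u - ut) * uh - p ^ 2 * (u - uh) * ut)
      / (q ^ 2 * (u - ut) - p ^ 2 * (u - uh)) := by
    rw [eq_div_iff hC]; linear_combination hbot
  have hutb : utb = ub * (ut - u) / ((ut - u) + p ^ 2 * ub) := by
    rw [eq_div_iff hB]; linear_combination hside1
  have huhb : uhb = ub * (uh - u) / ((uh - u) + q ^ 2 * ub) := by
    rw [eq_div_iff hB']; linear_combination hside2
  -- the three linear equations solved for w1, w2, w3
  have e1 : w1 * ((uth - ut) + q ^ 2 * utb) = utb * (uth - ut) := by linear_combination hback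
  have e2 : w2 * ((uth - uh) + p ^ 2 * uhb) = uhb * (uth - uh) := by linear_combination hright
  have e3 : w3 * (p ^ 2 * (ub - uhb) - q ^ 2 * (ub - utb))
      = p ^ 2 * (ub - uhb) * utb - q ^ 2 * (ub - utb) * uhb := by linear_combination -htop
  -- key polynomial identities
  have key12 : utb * (uth - ut) * ((uth - uh) + p ^ 2 * uhb)
      = uhb * (uth - uh) * ((uth - ut) + q ^ 2 * utb) := by
    rw [huth, hutb, huhb]
    field_simp [hC, (by rwa [mul_comm (p ^ 2)] at hB : ut - u + ub * p ^ 2 ≠ 0), (by rwa [mul_comm (q ^ 2)] at hB' : uh - u + ub * q ^ 2 ≠ 0)]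
    ring
  have key23 : uhb * (uth - uh) * (p ^ 2 * (ub - uhb) - q ^ 2 * (ub - utb))
      = (p ^ 2 * (ub - uhb) * utb - q ^ 2 * (ub - utb) * uhb)
        * ((uth - uh) + p ^ 2 * uhb) := by
    rw [huth, hutb, huhb]
    field_simp [hC, (by rwa [mul_comm (p ^ 2)] at hB : ut - u + ub * p ^ 2 ≠ 0), (by rwa [mul_comm (q ^ 2)] at hB' : uh - u + ub * q ^ 2 ≠ 0)]
    ring
  constructor
  · apply mul_right_cancel₀ (mul_ne_zero hnd1 hnd2)
    calc w1 * (((uth - ut) + q ^ 2 * utb) * ((uth - uh) + p ^ 2 * uhb))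
        = utb * (uth - ut) * ((uth - uh) + p ^ 2 * uhb) := by linear_combination ((uth - uh) + p ^ 2 * uhb) * e1
      _ = uhb * (uth - uh) * ((uth - ut) + q ^ 2 * utb) := key12
      _ = w2 * (((uth - ut) + q ^ 2 * utb) * ((uth - uh) + p ^ 2 * uhb)) := by
          linear_combination (-((uth - ut) + q ^ 2 * utb)) * e2
  · apply mul_right_cancel₀ (mul_ne_zero hnd2 hnd3)
    calc w2 * (((uth - uh) + p ^ 2 * uhb) * (p ^ 2 * (ub - uhb) - q ^ 2 * (ub - utb)))
        = uhb * (uth - uh) * (p ^ 2 * (ub - uhb) - q ^ 2 * (ub - utb)) := by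
          linear_combination (p ^ 2 * (ub - uhb) - q ^ 2 * (ub - utb)) * e2
      _ = (p ^ 2 * (ub - uhb) * utb - q ^ 2 * (ub - utb) * uhb) * ((uth - uh) + p ^ 2 * uhb) := key23
      _ = w3 * (((uth - uh) + p ^ 2 * uhb) * (p ^ 2 * (ub - uhb) - q ^ 2 * (ub - utb))) := by
          linear_combination (-((uth - uh) + p ^ 2 * uhb)) * e3
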